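/- Let μ be a probability measure on a countable group G whose support generates G as a semigroup, and let (c_n) be positive reals with lim_n c_n/c_{n+k} = 1 for each fixed k. For g ∈ G and t > λ := limsup (μ^{*n}(e))^{1/n} define ζ_c^g(t) = ∑_n μ^{*n}(g) c_n^{-1} t^{-n} (assumed finite for t > λ). Then for each g ∈ G, 0 < inf_{λ < t ≤ 2} ζ_c^g(t)/ζ_c^e(t) ≤ sup_{λ < t ≤ 2} ζ_c^g(t)/ζ_c^e(t) < ∞. -/

import Mathlib

open Filter Topology

noncomputable def conv {G : Type*} [Group G] (μ ν : G → ℝ) : G → ℝ :=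
  fun g => ∑' s : G, μ s * ν (s⁻¹ * g)

noncomputable def convPow {G : Type*} [Group G] [DecidableEq G] (μ : G → ℝ) : ℕ → G → ℝ
  | 0 => fun g => if g = 1 then 1 else 0
  | n + 1 => conv μ (convPow μ n)

section Aux

variable {G : Type*} [Group G] [Countable G] [DecidableEq G]

lemma convPow_nonneg (μ : G → ℝ) (hpos : ∀ g, 0 ≤ μ g) : ∀ n g, 0 ≤ convPow μ n g := by
  intro n
  induction n with
  | zero => intro g; simp only [convPow]; split_ifs <;> norm_num
  | succ n ih =>
    intro g
    simp only [convPow, conv]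
    exact tsum_nonneg fun s => mul_nonneg (hpos s) (ih _)

lemma mu_summable (μ : G → ℝ) (hprob : ∑' g : G, μ g = 1) : Summable μ := by
  by_contra h
  rw [tsum_eq_zero_of_not_summable h] at hprob
  norm_num at hprob

lemma convPow_le_one (μ : G → ℝ) (hpos : ∀ g, 0 ≤ μ g) (hprob : ∑' g : G, μ g = 1) :
    ∀ n g, convPow μ n g ≤ 1 := by
  have hμs := mu_summable μ hprob
  intro n
  induction n with
  | zero => intro g; simp only [convPow]; split_ifs <;> norm_num
  | succ n ih =>
    intro g
    have hsum : Summable (fun s => μ s * convPow μ n (s⁻¹ * g)) :=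
      Summable.of_nonneg_of_le
        (fun s => mul_nonneg (hpos s) (convPow_nonneg μ hpos _ _))
        (fun s => mul_le_of_le_one_right (hpos s) (ih _)) hμs
    calc convPow μ (n + 1) g = ∑' s, μ s * convPow μ n (s⁻¹ * g) := by
          simp only [convPow, conv]
      _ ≤ ∑' s, μ s :=
          Summable.tsum_le_tsum (fun s => mul_le_of_le_one_right (hpos s) (ih _)) hsum hμs
      _ = 1 := hprob

lemma convPow_inner_summable (μ : G → ℝ) (hpos : ∀ g, 0 ≤ μ g) (hprob : ∑' g : G, μ g = 1)
    (n : ℕ) (g : G) : Summable (fun s => μ s * convPow μ n (s⁻¹ * g)) :=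
  Summable.of_nonneg_of_le
    (fun s => mul_nonneg (hpos s) (convPow_nonneg μ hpos _ _))
    (fun s => mul_le_of_le_one_right (hpos s) (convPow_le_one μ hpos hprob _ _))
    (mu_summable μ hprob)

lemma convPow_mul_le (μ : G → ℝ) (hpos : ∀ g, 0 ≤ μ g) (hprob : ∑' g : G, μ g = 1) :
    ∀ (k n : ℕ) (a b : G), convPow μ k a * convPow μ n b ≤ convPow μ (k + n) (a * b) := by
  intro k
  induction k with
  | zero =>
    intro n a b
    by_cases ha : a = 1
    · subst ha; simp [convPow]
    · simp only [convPow, ha, if_false, zero_mul, zero_add, one_mul]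
      exact convPow_nonneg μ hpos _ _
  | succ k ih =>
    intro n a b
    have h1 : convPow μ (k + 1) a * convPow μ n b
        = ∑' s, μ s * convPow μ k (s⁻¹ * a) * convPow μ n b := by
      rw [show convPow μ (k + 1) a = ∑' s, μ s * convPow μ k (s⁻¹ * a) from by
        simp only [convPow, conv], ← tsum_mul_right]
    rw [h1, show k + 1 + n = (k + n) + 1 from by omega,
      show convPow μ ((k + n) + 1) (a * b) = ∑' s, μ s * convPow μ (k + n) (s⁻¹ * (a * b)) from by
        simp only [convPow, conv]]
    refine Summable.tsum_le_tsum ?_ ((convPow_inner_summable μ hpos hprob k a).mul_right _)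
      (convPow_inner_summable μ hpos hprob (k + n) (a * b))
    intro s
    calc μ s * convPow μ k (s⁻¹ * a) * convPow μ n b
        = μ s * (convPow μ k (s⁻¹ * a) * convPow μ n b) := mul_assoc _ _ _
      _ ≤ μ s * convPow μ (k + n) ((s⁻¹ * a) * b) :=
          mul_le_mul_of_nonneg_left (ih n (s⁻¹ * a) b) (hpos s)
      _ = μ s * convPow μ (k + n) (s⁻¹ * (a * b)) := by rw [mul_assoc]

lemma convPow_list_pos (μ : G → ℝ) (hpos : ∀ g, 0 ≤ μ g) (hprob : ∑' g : G, μ g = 1) :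
    ∀ l : List G, (∀ x ∈ l, 0 < μ x) → 0 < convPow μ l.length l.prod := by
  intro l
  induction l with
  | nil => intro _; simp [convPow]
  | cons x l ih =>
    intro h
    have hx := h x List.mem_cons_self
    have hl := ih (fun y hy => h y (List.mem_cons_of_mem x hy))
    have hterm : μ x * convPow μ l.length l.prod ≤ convPow μ (l.length + 1) (x * l.prod) := by
      have := Summable.le_tsum (convPow_inner_summable μ hpos hprob l.length (x * l.prod)) x
        (fun s _ => mul_nonneg (hpos s) (convPow_nonneg μ hpos _ _))
      simpa only [convPow, conv, inv_mul_cancel_left] using this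
    have : 0 < convPow μ (l.length + 1) (x * l.prod) := lt_of_lt_of_le (mul_pos hx hl) hterm
    simpa using this

lemma exists_ratio (c : ℕ → ℝ) (hc : ∀ n, 0 < c n) (k : ℕ)
    (hk : Filter.Tendsto (fun n : ℕ => c n / c (n + k)) Filter.atTop (nhds 1)) :
    ∃ ε : ℝ, 0 < ε ∧ ∀ n, ε ≤ c n / c (n + k) := by
  have hev := hk.eventually (eventually_gt_nhds (by norm_num : (1 / 2 : ℝ) < 1))
  rw [eventually_atTop] at hev
  obtain ⟨N, hN⟩ := hev
  refine ⟨(Finset.range (N + 1)).inf' ⟨0, by simp⟩ (fun n => min (1 / 2) (c n / c (n + k))),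
    ?_, ?_⟩
  · refine (Finset.lt_inf'_iff _).2 ?_
    intro n _
    exact lt_min (by norm_num) (div_pos (hc n) (hc _))
  · intro n
    rcases le_or_gt n N with h | h
    · exact (Finset.inf'_le _ (Finset.mem_range.mpr (by omega))).trans (min_le_right _ _)
    · refine le_trans ((Finset.inf'_le _ (by simp : 0 ∈ Finset.range (N + 1))).trans
        (min_le_left _ _)) (hN n (by omega)).le

lemma zeta_key (μ : G → ℝ) (hpos : ∀ g, 0 ≤ μ g) (hprob : ∑' g : G, μ g = 1)
    (c : ℕ → ℝ) (hc : ∀ n, 0 < c n)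
    (t : ℝ) (ht0 : 0 < t) (ht2 : t ≤ 2)
    (k : ℕ) (ε : ℝ) (hε : 0 < ε) (hεc : ∀ n, ε ≤ c n / c (n + k))
    (a b : G)
    (hsa : Summable (fun n : ℕ => convPow μ n (a * b) / c n * t ^ (-(n : ℤ))))
    (hsb : Summable (fun n : ℕ => convPow μ n b / c n * t ^ (-(n : ℤ)))) :
    convPow μ k a * ε * 2⁻¹ ^ k * ∑' n : ℕ, convPow μ n b / c n * t ^ (-(n : ℤ))
      ≤ ∑' n : ℕ, convPow μ n (a * b) / c n * t ^ (-(n : ℤ)) := by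
  set C : ℝ := convPow μ k a * ε * t ^ (-(k : ℤ)) with hC
  have hZ0 : 0 ≤ ∑' n : ℕ, convPow μ n b / c n * t ^ (-(n : ℤ)) :=
    tsum_nonneg fun n => mul_nonneg (div_nonneg (convPow_nonneg μ hpos _ _) (hc n).le)
      (zpow_nonneg ht0.le _)
  have h2 : (2 : ℝ)⁻¹ ^ k ≤ t ^ (-(k : ℤ)) := by
    rw [zpow_neg, zpow_natCast, inv_pow]
    have h0 : (0 : ℝ) < t ^ k := pow_pos ht0 k
    have hle : t ^ k ≤ 2 ^ k := pow_le_pow_left₀ ht0.le ht2 k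
    exact inv_anti₀ h0 hle
  calc convPow μ k a * ε * 2⁻¹ ^ k * ∑' n : ℕ, convPow μ n b / c n * t ^ (-(n : ℤ))
      ≤ C * ∑' n : ℕ, convPow μ n b / c n * t ^ (-(n : ℤ)) := by
        apply mul_le_mul_of_nonneg_right _ hZ0
        exact mul_le_mul_of_nonneg_left h2
          (mul_nonneg (convPow_nonneg μ hpos _ _) hε.le)
    _ = ∑' n : ℕ, C * (convPow μ n b / c n * t ^ (-(n : ℤ))) := tsum_mul_left.symm
    _ ≤ ∑' n : ℕ, convPow μ n (a * b) / c n * t ^ (-(n : ℤ)) := by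
        apply (hsb.mul_left C).tsum_le_tsum_of_inj (fun n : ℕ => n + k)
          (add_left_injective k)
          (fun m _ => mul_nonneg (div_nonneg (convPow_nonneg μ hpos _ _) (hc m).le)
            (zpow_nonneg ht0.le _))
          _ hsa
        intro n
        have hkey := convPow_mul_le μ hpos hprob k n a b
        have hcc : ε / c n ≤ 1 / c (n + k) := by
          rw [div_le_div_iff₀ (hc n) (hc (n + k))]
          have := (le_div_iff₀ (hc (n + k))).mp (hεc n)
          linarith
        have htn : (0 : ℝ) ≤ t ^ (-((n + k : ℕ) : ℤ)) := zpow_nonneg ht0.le _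
        calc C * (convPow μ n b / c n * t ^ (-(n : ℤ)))
            = (convPow μ k a * convPow μ n b) * (ε / c n) * t ^ (-((n + k : ℕ) : ℤ)) := by
              rw [show (-((n + k : ℕ) : ℤ)) = (-(n : ℤ)) + (-(k : ℤ)) by push_cast; ring,
                zpow_add₀ ht0.ne']
              rw [hC]; ring
          _ ≤ (convPow μ (k + n) (a * b)) * (1 / c (n + k)) * t ^ (-((n + k : ℕ) : ℤ)) := by
              apply mul_le_mul_of_nonneg_right _ htn
              exact mul_le_mul hkey hcc (div_nonneg hε.le (hc n).le)
                (convPow_nonneg μ hpos _ _)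
          _ = convPow μ (n + k) (a * b) / c (n + k) * t ^ (-((n + k : ℕ) : ℤ)) := by
              rw [add_comm k n]; ring

end Aux

theorem stmt15 {G : Type*} [Group G] [Countable G] [DecidableEq G]
    (μ : G → ℝ) (hpos : ∀ g, 0 ≤ μ g) (hprob : ∑' g : G, μ g = 1)
    (hgen : ∀ γ : G, ∃ l : List G, l ≠ [] ∧ (∀ x ∈ l, 0 < μ x) ∧ l.prod = γ)
    (c : ℕ → ℝ) (hc : ∀ n, 0 < c n)
    (hslow : ∀ k : ℕ, Filter.Tendsto (fun n : ℕ => c n / c (n + k)) Filter.atTop (nhds 1))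
    (lam : ℝ)
    (hlam : lam = Filter.limsup (fun n : ℕ => (convPow μ n 1) ^ ((n : ℝ)⁻¹)) Filter.atTop)
    (ζ : G → ℝ → ℝ)
    (hζ : ∀ (g : G) (t : ℝ), ζ g t = ∑' n : ℕ, convPow μ n g / c n * t ^ (-(n : ℤ)))
    (hconv : ∀ (g : G) (t : ℝ), lam < t →
      Summable (fun n : ℕ => convPow μ n g / c n * t ^ (-(n : ℤ))))
    (g : G) :
    ∃ A B : ℝ, 0 < A ∧
      ∀ t : ℝ, lam < t → t ≤ 2 → A ≤ ζ g t / ζ 1 t ∧ ζ g t / ζ 1 t ≤ B := by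
  -- lam is nonnegative
  have hlam0 : 0 ≤ lam := by
    rw [hlam]
    apply Filter.le_limsup_of_frequently_le
    · exact Filter.Frequently.of_forall fun n =>
        Real.rpow_nonneg (convPow_nonneg μ hpos n 1) _
    · refine Filter.isBoundedUnder_of ⟨1, fun n => ?_⟩
      exact Real.rpow_le_one (convPow_nonneg μ hpos n 1)
        (convPow_le_one μ hpos hprob n 1) (by positivity)
  -- choose exponents for g and g⁻¹
  obtain ⟨l₁, -, hl₁pos, hl₁prod⟩ := hgen g
  obtain ⟨l₂, -, hl₂pos, hl₂prod⟩ := hgen g⁻¹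
  set k₁ := l₁.length
  set k₂ := l₂.length
  have hp₁ : 0 < convPow μ k₁ g := by
    have := convPow_list_pos μ hpos hprob l₁ hl₁pos; rwa [hl₁prod] at this
  have hp₂ : 0 < convPow μ k₂ g⁻¹ := by
    have := convPow_list_pos μ hpos hprob l₂ hl₂pos; rwa [hl₂prod] at this
  obtain ⟨ε₁, hε₁, hε₁c⟩ := exists_ratio c hc k₁ (hslow k₁)
  obtain ⟨ε₂, hε₂, hε₂c⟩ := exists_ratio c hc k₂ (hslow k₂)
  set D : ℝ := convPow μ k₂ g⁻¹ * ε₂ * 2⁻¹ ^ k₂ with hD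
  have hDpos : 0 < D := by
    apply mul_pos (mul_pos hp₂ hε₂); positivity
  refine ⟨convPow μ k₁ g * ε₁ * 2⁻¹ ^ k₁, D⁻¹, mul_pos (mul_pos hp₁ hε₁) (by positivity), ?_⟩
  intro t hgt hle
  have ht0 : 0 < t := lt_of_le_of_lt hlam0 hgt
  have hZ1pos : 0 < ζ 1 t := by
    rw [hζ]
    have hsum := hconv 1 t hgt
    have h0 : (0 : ℝ) < convPow μ 0 1 / c 0 * t ^ (-(0 : ℕ) : ℤ) := by
      have h1 : convPow μ 0 (1 : G) = 1 := by simp [convPow]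
      rw [h1]
      have := hc 0
      positivity
    refine lt_of_lt_of_le h0 (Summable.le_tsum hsum 0 fun n _ => ?_)
    exact mul_nonneg (div_nonneg (convPow_nonneg μ hpos _ _) (hc n).le) (zpow_nonneg ht0.le _)
  have hZgnn : 0 ≤ ζ g t := by
    rw [hζ]
    exact tsum_nonneg fun n => mul_nonneg
      (div_nonneg (convPow_nonneg μ hpos _ _) (hc n).le) (zpow_nonneg ht0.le _)
  constructor
  · -- lower bound
    have hkey := zeta_key μ hpos hprob c hc t ht0 hle k₁ ε₁ hε₁ hε₁c g 1
      (by simpa using hconv g t hgt) (by simpa using hconv 1 t hgt)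
    simp only [mul_one] at hkey
    rw [le_div_iff₀ hZ1pos]
    rw [hζ g t, hζ 1 t]
    exact hkey
  · -- upper bound
    have hkey := zeta_key μ hpos hprob c hc t ht0 hle k₂ ε₂ hε₂ hε₂c g⁻¹ g
      (by simpa using hconv 1 t hgt) (by simpa using hconv g t hgt)
    simp only [inv_mul_cancel] at hkey
    rw [← hζ g t, ← hζ 1 t] at hkey
    rw [div_le_iff₀ hZ1pos]
    calc ζ g t = D⁻¹ * (D * ζ g t) := by field_simp
      _ ≤ D⁻¹ * ζ 1 t := by
          apply mul_le_mul_of_nonneg_left _ (inv_nonneg.mpr hDpos.le)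
          exact hkey
      _ = D⁻¹ * ζ 1 t := rfl
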